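/- Let N ≥ 2 and n_1, …, n_N ≥ 1 be integers, and let ρ^{(1)}, …, ρ^{(N)} be density operators, where ρ^{(i)} acts on registers A_i B^i_1 … B^i_{n_i} (that is, on n_i + 1 qubits). Let 𝓛 be the map 𝓛(ρ) = Σ_{y ∈ {0,1}^{N−1}} M_y ρ M_y†, where M_y = ( I_{A_1} ⊗ ⟨y|_{A_2…A_N} ⊗ (X^{y_1})^{⊗ n_2}_{B^2} ⊗ … ⊗ (X^{y_{N−1}})^{⊗ n_N}_{B^N} ⊗ I_{B^1} ) ( CNOT_N on A_1…A_N ⊗ I ). Then, writing N_tot = n_1 + … + n_N, ⟨GHZ_{1+N_tot}| 𝓛(ρ^{(1)} ⊗ … ⊗ ρ^{(N)}) |GHZ_{1+N_tot}⟩ = Σ_{z ∈ {0,1}^{N−1}} ⟨GHZ_{n_1+1}^{(z',0⃗)}| ρ^{(1)} |GHZ_{n_1+1}^{(z',0⃗)}⟩ · ∏_{i=1}^{N−1} ⟨GHZ_{n_{i+1}+1}^{(z_i,0⃗)}| ρ^{(i+1)} |GHZ_{n_{i+1}+1}^{(z_i,0⃗)}⟩, where z' = z_1 ⊕ … ⊕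 z_{N−1}. -/

import Mathlib

open Matrix
open scoped ComplexOrder

/-- Basis labels for the registers `A_1, …, A_N` together with the blocks
`B¹, …, Bᴺ`, where block `Bⁱ` consists of `n i` qubits (`N = N' + 2`). -/
abbrev FullBasis (N : ℕ) (n : Fin (N + 2) → ℕ) : Type :=
  (Fin (N + 2) → Fin 2) × ((i : Fin (N + 2)) → Fin (n i) → Fin 2)

/-- Basis labels for the output registers `A_1, B¹, …, Bᴺ`. -/
abbrev OutBasis (N : ℕ) (n : Fin (N + 2) → ℕ) : Type :=
  Fin 2 × ((i : Fin (N + 2)) → Fin (n i) → Fin 2)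

/-- Amplitude of the GHZ basis state `|GHZ_{m+1}^{(z, 0⃗)}⟩ = (Z^z ⊗ I)|GHZ_{m+1}⟩`
on one qubit together with an `m`-qubit block. -/
noncomputable def ghzBasis0 (m : ℕ) (z : Fin 2) : Fin 2 × (Fin m → Fin 2) → ℂ := fun u =>
  ((if u.1 = 0 ∧ (∀ j, u.2 j = 0) then 1 else 0) +
      (if u.1 = 1 ∧ (∀ j, u.2 j = 1) then (-1 : ℂ) ^ z.val else 0)) / (Real.sqrt 2 : ℂ)

/-- Amplitude of the big GHZ state `|GHZ_{1 + N_tot}⟩` on registers `A_1, B¹, …, Bᴺ`. -/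
noncomputable def ghzBig (N : ℕ) (n : Fin (N + 2) → ℕ) : OutBasis N n → ℂ := fun u =>
  ((if u.1 = 0 ∧ (∀ i j, u.2 i j = 0) then 1 else 0) +
      (if u.1 = 1 ∧ (∀ i j, u.2 i j = 1) then 1 else 0)) / (Real.sqrt 2 : ℂ)

/-- `CNOT_N ⊗ I`: the operator `|0⟩⟨0| ⊗ I^{⊗(N-1)} + |1⟩⟨1| ⊗ X^{⊗(N-1)}` on the
registers `A_1, …, A_N` (control `A_1`), identity on all `B` blocks. -/
noncomputable def cnotA (N : ℕ) (n : Fin (N + 2) → ℕ) :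
    Matrix (FullBasis N n) (FullBasis N n) ℂ :=
  Matrix.of fun p q =>
    if p.2 = q.2 ∧ p.1 0 = q.1 0 ∧ (∀ i, i ≠ 0 → p.1 i = q.1 i + q.1 0)
    then (1 : ℂ) else 0

/-- The correction operator `⊗_{i=1}^{N-1} (X^{y_i})^{⊗ n_{i+1}}` applied to the
qubits of block `B^{i+1}` (identity on block `B¹` and on the `A` registers). -/
noncomputable def xCorr (N : ℕ) (n : Fin (N + 2) → ℕ) (y : Fin (N + 1) → Fin 2) :
    Matrix (FullBasis N n) (FullBasis N n) ℂ :=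
  Matrix.of fun p q =>
    if p.1 = q.1 ∧ (∀ i j, p.2 i j = q.2 i j + (Fin.cons 0 y : Fin (N + 2) → Fin 2) i)
    then (1 : ℂ) else 0

/-- The Kraus operator
`M_y = (I_{A_1} ⊗ ⟨y|_{A_2 ⋯ A_N} ⊗ (X^{y_1})^{⊗ n_2}_{B²} ⊗ ⋯ ⊗ (X^{y_{N-1}})^{⊗ n_N}_{Bᴺ} ⊗ I_{B¹})(CNOT_N ⊗ I)`. -/
noncomputable def krausM (N : ℕ) (n : Fin (N + 2) → ℕ) (y : Fin (N + 1) → Fin 2) :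
    Matrix (OutBasis N n) (FullBasis N n) ℂ :=
  Matrix.of fun o p => (xCorr N n y * cnotA N n) ((Fin.cons o.1 y, o.2)) p

/-- The tensor product `ρ⁽¹⁾ ⊗ ⋯ ⊗ ρ⁽ᴺ⁾`, where `ρ⁽ⁱ⁾` acts on `A_i Bⁱ`. -/
noncomputable def prodState (N : ℕ) (n : Fin (N + 2) → ℕ)
    (ρ : (i : Fin (N + 2)) →
      Matrix (Fin 2 × (Fin (n i) → Fin 2)) (Fin 2 × (Fin (n i) → Fin 2)) ℂ) :
    Matrix (FullBasis N n) (FullBasis N n) ℂ :=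
  Matrix.of fun p q => ∏ i, ρ i (p.1 i, p.2 i) (q.1 i, q.2 i)

/-- The overlap `⟨GHZ_{m+1}^{(z,0⃗)}| σ |GHZ_{m+1}^{(z,0⃗)}⟩`. -/
noncomputable def ghzOverlap (m : ℕ) (z : Fin 2)
    (σ : Matrix (Fin 2 × (Fin m → Fin 2)) (Fin 2 × (Fin m → Fin 2)) ℂ) : ℂ :=
  star (ghzBasis0 m z) ⬝ᵥ σ.mulVec (ghzBasis0 m z)

namespace StarFusionAux

/-- sign character on `Fin 2`. -/
noncomputable def chi (x : Fin 2) : ℂ := (-1) ^ x.val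

lemma chi_zero : chi 0 = 1 := by simp [chi]
lemma chi_one : chi 1 = -1 := by simp [chi]

lemma chi_add (x y : Fin 2) : chi (x + y) = chi x * chi y := by
  fin_cases x <;> fin_cases y <;> simp [chi]

lemma chi_sum {ι : Type*} (s : Finset ι) (f : ι → Fin 2) :
    chi (∑ i ∈ s, f i) = ∏ i ∈ s, chi (f i) := by
  classical
  induction s using Finset.cons_induction with
  | empty => simp [chi_zero]
  | cons a s ha ih => simp [Finset.sum_insert ha, Finset.prod_insert ha, chi_add, ih]

lemma sum_chi_mul (t : Fin 2) :
    ∑ u : Fin 2, chi (u * t) = if t = 0 then 2 else 0 := by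
  fin_cases t <;> simp [Fin.sum_univ_two, chi] <;> norm_num

lemma fin2_eq_add_iff (a b c : Fin 2) : a = b + c ↔ b = a + c := by
  revert a b c; decide

lemma fin2_addself (a : Fin 2) : a + a = 0 := by revert a; decide

lemma sqrt2C_mul_self : (Real.sqrt 2 : ℂ) * (Real.sqrt 2 : ℂ) = 2 := by
  rw [← Complex.ofReal_mul, Real.mul_self_sqrt (by norm_num)]
  norm_num

/-- quadratic form of a two-point superposition vector. -/
lemma quad {α : Type*} [Fintype α] [DecidableEq α] (M : Matrix α α ℂ) (e0 e1 : α)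
    (c : ℂ) (hc : star c = c)
    (v : α → ℂ)
    (hv : v = fun p => ((if p = e0 then 1 else 0) + c * (if p = e1 then 1 else 0)) /
      (Real.sqrt 2 : ℂ)) :
    star v ⬝ᵥ M.mulVec v
      = (M e0 e0 + c * M e0 e1 + c * M e1 e0 + c * c * M e1 e1) / 2 := by
  have h2 : (Real.sqrt 2 : ℂ) * (Real.sqrt 2 : ℂ) = 2 := sqrt2C_mul_self
  have hs2 : (Real.sqrt 2 : ℂ) ≠ 0 := by
    intro h
    rw [Complex.ofReal_eq_zero] at h
    exact absurd h (by positivity)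
  have hsv : star v = v := by
    funext p
    simp only [hv, Pi.star_apply, star_div₀, star_add, star_mul', hc,
      Complex.star_def, Complex.conj_ofReal, apply_ite (starRingEnd ℂ), map_zero,
      RingHom.map_one]
  have key : ∀ f : α → ℂ, v ⬝ᵥ f = (f e0 + c * f e1) / (Real.sqrt 2 : ℂ) := by
    intro f
    rw [hv]
    simp only [dotProduct, div_eq_mul_inv, add_mul, ite_mul, mul_ite, one_mul, zero_mul,
      Finset.sum_add_distrib, Finset.sum_ite_eq', Finset.mem_univ, if_true]
    simp [Finset.sum_ite_eq']
    ring
  rw [hsv]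
  have hmv : ∀ p, M.mulVec v p = (M p e0 + c * M p e1) / (Real.sqrt 2 : ℂ) := by
    intro p
    have : M.mulVec v p = v ⬝ᵥ fun q => M p q := by
      simp [mulVec, dotProduct, mul_comm]
    rw [this, key]
  have h3 : v ⬝ᵥ M.mulVec v = ((M.mulVec v) e0 + c * (M.mulVec v) e1) / (Real.sqrt 2 : ℂ) :=
    key _
  rw [h3, hmv, hmv]
  field_simp
  rw [show (Real.sqrt 2 : ℂ) ^ 2 = 2 by rw [sq, h2]]
  ring


variable {N : ℕ} {n : Fin (N + 2) → ℕ}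

/-- the classical configuration basis vector `E s`. -/
def E (N : ℕ) (n : Fin (N + 2) → ℕ) (s : Fin (N + 2) → Fin 2) : FullBasis N n :=
  (s, fun i _ => s i)

lemma krausM_apply (y : Fin (N + 1) → Fin 2) (o : OutBasis N n) (p : FullBasis N n) :
    krausM N n y o p =
      if (o.1 = p.1 0 ∧ (∀ i : Fin (N + 1), y i = p.1 i.succ + p.1 0) ∧
          (∀ i j, o.2 i j = p.2 i j + (Fin.cons 0 y : Fin (N + 2) → Fin 2) i))
      then 1 else 0 := by
  classical
  set c : Fin (N + 2) → Fin 2 := (Fin.cons 0 y)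
  have hc0 : c 0 = 0 := rfl
  -- abbreviations
  set r0 : FullBasis N n := (Fin.cons o.1 y, fun i j => o.2 i j + c i) with hr0
  have hx : ∀ r : FullBasis N n,
      xCorr N n y (Fin.cons o.1 y, o.2) r = if r = r0 then 1 else 0 := by
    intro r
    unfold xCorr
    simp only [Matrix.of_apply]
    congr 1
    simp only [eq_iff_iff]
    constructor
    · rintro ⟨h1, h2⟩
      have : r.2 = fun i j => o.2 i j + c i := by
        funext i j
        exact (fin2_eq_add_iff _ _ _).mp (h2 i j)
      exact Prod.ext h1.symm this
    · rintro rfl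
      refine ⟨rfl, fun i j => ?_⟩
      show o.2 i j = o.2 i j + c i + c i
      rw [add_assoc, fin2_addself, add_zero]
  have hmul : krausM N n y o p = cnotA N n r0 p := by
    unfold krausM
    show (xCorr N n y * cnotA N n) (Fin.cons o.1 y, o.2) p = _
    rw [Matrix.mul_apply]
    rw [Finset.sum_congr rfl (fun r _ => by rw [hx r])]
    simp [Finset.sum_ite_eq']
  rw [hmul]
  unfold cnotA
  simp only [Matrix.of_apply]
  congr 1
  simp only [eq_iff_iff]
  constructor
  · rintro ⟨h1, h2, h3⟩
    refine ⟨by simpa [hr0] using h2, fun i => ?_, fun i j => ?_⟩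
    · have := h3 i.succ (Fin.succ_ne_zero i)
      simpa [Fin.cons_succ, hr0] using this
    · have := congrFun (congrFun h1 i) j
      simp only [hr0] at this
      exact (fin2_eq_add_iff _ _ _).mp this.symm
  · rintro ⟨h1, h2, h3⟩
    refine ⟨?_, by simpa [hr0] using h1, fun i hi => ?_⟩
    · funext i j
      exact ((fin2_eq_add_iff _ _ _).mp (h3 i j)).symm
    · obtain ⟨j, rfl⟩ := Fin.exists_succ_eq.mpr hi
      simpa [Fin.cons_succ, hr0] using (h2 j)

lemma fin2_add_eq_zero_iff (a b : Fin 2) : a + b = 0 ↔ a = b := by revert a b; decide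
lemma fin2_add_eq_one_iff (a b : Fin 2) : a + b = 1 ↔ a = b + 1 := by revert a b; decide
lemma fin2_aux1 (a : Fin 2) : (a + 1) + (0 + 1) = a := by revert a; decide
lemma fin2_aux2 (a : Fin 2) : (a + 0) + (0 + 0) = a := by revert a; decide

lemma vy_eq (y : Fin (N + 1) → Fin 2) :
    (krausM N n y)ᴴ *ᵥ ghzBig N n = fun p =>
      ((if p = E N n (fun i => (Fin.cons 0 y : Fin (N + 2) → Fin 2) i + 0) then 1 else 0) +
        (1 : ℂ) *
          (if p = E N n (fun i => (Fin.cons 0 y : Fin (N + 2) → Fin 2) i + 1) then 1 else 0)) /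
        (Real.sqrt 2 : ℂ) := by
  classical
  funext p
  set c : Fin (N + 2) → Fin 2 := (Fin.cons 0 y) with hc
  set o0 : OutBasis N n := (p.1 0, fun i j => p.2 i j + c i) with ho0
  have step1 : ((krausM N n y)ᴴ *ᵥ ghzBig N n) p =
      ∑ o : OutBasis N n, (if ((∀ i : Fin (N + 1), y i = p.1 i.succ + p.1 0) ∧
        o = o0) then 1 else 0) * ghzBig N n o := by
    simp only [mulVec, dotProduct]
    apply Finset.sum_congr rfl
    intro o _
    rw [conjTranspose_apply, krausM_apply]
    congr 1
    · rw [apply_ite (star : ℂ → ℂ), star_one, star_zero]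
      congr 1
      simp only [eq_iff_iff]
      constructor
      · rintro ⟨h1, h2, h3⟩
        exact ⟨h2, Prod.ext h1 (funext fun i => funext fun j => h3 i j)⟩
      · rintro ⟨h2, rfl⟩
        exact ⟨rfl, h2, fun i j => rfl⟩
  rw [step1]
  by_cases hC : ∀ i : Fin (N + 1), y i = p.1 i.succ + p.1 0
  · have hiff : ∀ o : OutBasis N n,
        ((∀ i : Fin (N + 1), y i = p.1 i.succ + p.1 0) ∧ o = o0) ↔ o = o0 :=
      fun o => ⟨And.right, fun h => ⟨hC, h⟩⟩
    simp only [hiff, ite_mul, one_mul, zero_mul]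
    rw [Finset.sum_ite_eq' Finset.univ o0 (fun o => ghzBig N n o),
      if_pos (Finset.mem_univ _)]
    unfold ghzBig
    congr 1
    congr 1
    · congr 1
      simp only [eq_iff_iff, ho0]
      constructor
      · rintro ⟨h0, h2⟩
        refine Prod.ext (funext fun i => ?_) (funext fun i => funext fun j => ?_)
        · refine Fin.cases ?_ (fun k => ?_) i
          · simpa [E, hc] using h0
          · have hk := hC k
            rw [h0, add_zero] at hk
            simp [E, hc, Fin.cons_succ, ← hk]
        · have h2' := h2 i j
          rw [fin2_add_eq_zero_iff] at h2'
          simp [E, h2']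
      · rintro rfl
        refine ⟨rfl, fun i j => ?_⟩
        show (c i + 0) + c i = 0
        rw [add_zero, fin2_addself]
    · congr 1
      simp only [eq_iff_iff, ho0]
      constructor
      · rintro ⟨h0, h2⟩
        refine Prod.ext (funext fun i => ?_) (funext fun i => funext fun j => ?_)
        · refine Fin.cases ?_ (fun k => ?_) i
          · simpa [E, hc] using h0
          · have hk := hC k
            rw [h0] at hk
            have hk' : p.1 k.succ = y k + 1 := by
              rw [hk, add_assoc, fin2_addself, add_zero]
            simp [E, hc, Fin.cons_succ, hk']
        · have h2' := h2 i j
          rw [fin2_add_eq_one_iff] at h2'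
          simp [E, h2']
      · rintro rfl
        refine ⟨by simp [E, c], fun i j => ?_⟩
        show (c i + 1) + c i = 1
        rw [add_comm (c i) 1, add_assoc, fin2_addself, add_zero]
  · have hzero : ∀ o : OutBasis N n,
        (if ((∀ i : Fin (N + 1), y i = p.1 i.succ + p.1 0) ∧ o = o0) then (1:ℂ) else 0) = 0 :=
      fun o => if_neg fun h => hC h.1
    simp only [hzero, zero_mul, Finset.sum_const_zero]
    have h1 : ¬ p = E N n (fun i => c i + 0) := by
      intro h
      apply hC
      intro i
      rw [h]
      show y i = (c i.succ + 0) + (c 0 + 0)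
      simp only [c, Fin.cons_succ, Fin.cons_zero]
      exact (fin2_aux2 (y i)).symm
    have h2 : ¬ p = E N n (fun i => c i + 1) := by
      intro h
      apply hC
      intro i
      rw [h]
      show y i = (c i.succ + 1) + (c 0 + 1)
      simp only [c, Fin.cons_succ, Fin.cons_zero]
      exact (fin2_aux1 (y i)).symm
    rw [if_neg h1, if_neg h2]
    simp




def U (m : ℕ) (a : Fin 2) : Fin 2 × (Fin m → Fin 2) := (a, fun _ => a)

lemma ghzBasis0_eq (m : ℕ) (z : Fin 2) :
    ghzBasis0 m z = fun u =>
      ((if u = U m 0 then 1 else 0) +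
        ((-1 : ℂ) ^ z.val) * (if u = U m 1 then 1 else 0)) / (Real.sqrt 2 : ℂ) := by
  funext u
  unfold ghzBasis0
  have h1 : (u.1 = 0 ∧ ∀ j, u.2 j = 0) ↔ u = U m 0 :=
    ⟨fun ⟨h, h2⟩ => Prod.ext h (funext h2), fun h => by subst h; exact ⟨rfl, fun _ => rfl⟩⟩
  have h2 : (u.1 = 1 ∧ ∀ j, u.2 j = 1) ↔ u = U m 1 :=
    ⟨fun ⟨h, h2⟩ => Prod.ext h (funext h2), fun h => by subst h; exact ⟨rfl, fun _ => rfl⟩⟩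
  rw [if_congr h1 rfl rfl, if_congr h2 rfl rfl]
  congr 1
  split_ifs <;> ring

lemma overlap_eq (m : ℕ) (z : Fin 2)
    (σ : Matrix (Fin 2 × (Fin m → Fin 2)) (Fin 2 × (Fin m → Fin 2)) ℂ) :
    ghzOverlap m z σ =
      (∑ q : Fin 2 × Fin 2, chi (z * (q.1 + q.2)) * σ (U m q.1) (U m q.2)) / 2 := by
  unfold ghzOverlap
  rw [quad σ (U m 0) (U m 1) ((-1 : ℂ) ^ z.val) (by simp) _ (ghzBasis0_eq m z)]
  rw [Fintype.sum_prod_type]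
  fin_cases z <;>
    simp [Fin.sum_univ_two, chi] <;> ring


lemma dot_sum {α ι : Type*} [Fintype α] [Fintype ι] (T : ι → Matrix α α ℂ) (ψ : α → ℂ) :
    star ψ ⬝ᵥ (∑ y, T y) *ᵥ ψ = ∑ y, star ψ ⬝ᵥ (T y) *ᵥ ψ := by
  have h1 : (∑ y, T y) *ᵥ ψ = ∑ y, T y *ᵥ ψ := by
    funext p
    simp only [mulVec, dotProduct, Matrix.sum_apply, Finset.sum_mul, Finset.sum_apply]
    exact Finset.sum_comm
  rw [h1]
  simp only [dotProduct, Finset.sum_apply, Finset.mul_sum]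
  exact Finset.sum_comm

lemma conj_sandwich {α β : Type*} [Fintype α] [Fintype β] (A : Matrix β α ℂ)
    (P : Matrix α α ℂ) (ψ : β → ℂ) :
    star ψ ⬝ᵥ (A * P * Aᴴ) *ᵥ ψ = star (Aᴴ *ᵥ ψ) ⬝ᵥ P *ᵥ (Aᴴ *ᵥ ψ) := by
  rw [Matrix.star_mulVec, conjTranspose_conjTranspose, ← Matrix.mulVec_mulVec,
    ← Matrix.mulVec_mulVec, dotProduct_mulVec]

lemma local_sum (a b : Fin 2) (F : Fin 2 → Fin 2 → ℂ) :
    ∑ u : Fin 2, F (u + a) (u + b)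
      = ∑ q : Fin 2 × Fin 2, if q.1 + q.2 = a + b then F q.1 q.2 else 0 := by
  fin_cases a <;> fin_cases b <;>
    simp [Fin.sum_univ_two, Fintype.sum_prod_type] <;> ring

end StarFusionAux

open StarFusionAux

/-- **Fidelity after the star fusion of `N` noisy GHZ states (Protocol 6).**
For `N ≥ 2` (written `N + 2`) and block sizes `n i ≥ 1`, if `ρ⁽ⁱ⁾` are density
operators on `A_i Bⁱ`, then with `𝓛(ρ) = ∑_y M_y ρ M_y†`,
`⟨GHZ_{1+N_tot}| 𝓛(ρ⁽¹⁾ ⊗ ⋯ ⊗ ρ⁽ᴺ⁾) |GHZ_{1+N_tot}⟩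
  = ∑_{z ∈ {0,1}^{N-1}} ⟨GHZ_{n₁+1}^{(z',0⃗)}|ρ⁽¹⁾|GHZ_{n₁+1}^{(z',0⃗)}⟩
      ∏_{i=1}^{N-1} ⟨GHZ_{n_{i+1}+1}^{(z_i,0⃗)}|ρ⁽ⁱ⁺¹⁾|GHZ_{n_{i+1}+1}^{(z_i,0⃗)}⟩`,
with `z' = z₁ ⊕ ⋯ ⊕ z_{N-1}`. -/
theorem fidelity_after_star_fusion (N : ℕ) (n : Fin (N + 2) → ℕ) (hn : ∀ i, 1 ≤ n i)
    (ρ : (i : Fin (N + 2)) →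
      Matrix (Fin 2 × (Fin (n i) → Fin 2)) (Fin 2 × (Fin (n i) → Fin 2)) ℂ)
    (hpsd : ∀ i, (ρ i).PosSemidef) (htr : ∀ i, (ρ i).trace = 1) :
    star (ghzBig N n) ⬝ᵥ
        (∑ y : Fin (N + 1) → Fin 2,
            krausM N n y * prodState N n ρ * (krausM N n y)ᴴ).mulVec (ghzBig N n)
      = ∑ z : Fin (N + 1) → Fin 2,
          ghzOverlap (n 0) (∑ i, z i) (ρ 0) *
            ∏ i : Fin (N + 1), ghzOverlap (n i.succ) (z i) (ρ i.succ) := by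
  classical
  set RR : (i : Fin (N + 2)) → Fin 2 → Fin 2 → ℂ :=
    fun i a b => ρ i (U (n i) a) (U (n i) b) with hRRdef
  have prodE : ∀ s t : Fin (N + 2) → Fin 2,
      prodState N n ρ (E N n s) (E N n t) = ∏ i, RR i (s i) (t i) := fun s t => rfl
  -- ==================== LHS ====================
  have hD : ∀ (y : Fin (N + 1) → Fin 2) (a b : Fin 2),
      prodState N n ρ (E N n (fun i => (Fin.cons 0 y : Fin (N + 2) → Fin 2) i + a))
          (E N n (fun i => (Fin.cons 0 y : Fin (N + 2) → Fin 2) i + b))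
        = RR 0 a b * ∏ k : Fin (N + 1), RR k.succ (y k + a) (y k + b) := by
    intro y a b
    rw [prodE, Fin.prod_univ_succ]
    simp [Fin.cons_zero, Fin.cons_succ]
  have hterm : ∀ y : Fin (N + 1) → Fin 2,
      star (ghzBig N n) ⬝ᵥ
          (krausM N n y * prodState N n ρ * (krausM N n y)ᴴ) *ᵥ (ghzBig N n)
        = ∑ a : Fin 2, ∑ b : Fin 2,
            (RR 0 a b * ∏ k : Fin (N + 1), RR k.succ (y k + a) (y k + b)) / 2 := by
    intro y
    rw [conj_sandwich, quad (prodState N n ρ) _ _ 1 (by simp) _ (vy_eq y)]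
    simp only [one_mul, Fin.sum_univ_two, hD y]
    ring
  have hLHS : star (ghzBig N n) ⬝ᵥ
        (∑ y : Fin (N + 1) → Fin 2,
            krausM N n y * prodState N n ρ * (krausM N n y)ᴴ).mulVec (ghzBig N n)
      = ∑ a : Fin 2, ∑ b : Fin 2, ∑ y : Fin (N + 1) → Fin 2,
          (RR 0 a b * ∏ k : Fin (N + 1), RR k.succ (y k + a) (y k + b)) / 2 := by
    rw [show (∑ y : Fin (N + 1) → Fin 2,
            krausM N n y * prodState N n ρ * (krausM N n y)ᴴ).mulVec (ghzBig N n)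
        = (∑ y : Fin (N + 1) → Fin 2,
            krausM N n y * prodState N n ρ * (krausM N n y)ᴴ) *ᵥ (ghzBig N n) from rfl]
    rw [dot_sum]
    rw [Finset.sum_congr rfl fun y _ => hterm y]
    rw [Finset.sum_comm]
    exact Finset.sum_congr rfl fun a _ => Finset.sum_comm
  rw [hLHS]
  -- ==================== RHS ====================
  -- expand each overlap and push into a canonical double sum
  have h1 : ∀ z : Fin (N + 1) → Fin 2,
      ghzOverlap (n 0) (∑ i, z i) (ρ 0) *
          ∏ k : Fin (N + 1), ghzOverlap (n k.succ) (z k) (ρ k.succ)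
        = ∑ q0 : Fin 2 × Fin 2, ∑ g : Fin (N + 1) → Fin 2 × Fin 2,
            (chi ((∑ i, z i) * (q0.1 + q0.2)) *
                ∏ k : Fin (N + 1), chi (z k * ((g k).1 + (g k).2))) *
              ((RR 0 q0.1 q0.2 / 2) *
                ∏ k : Fin (N + 1), (RR k.succ (g k).1 (g k).2 / 2)) := by
    intro z
    simp only [hRRdef]
    rw [overlap_eq]
    rw [Finset.prod_congr rfl fun k _ => overlap_eq (n k.succ) (z k) (ρ k.succ)]
    rw [Finset.sum_div]
    rw [Finset.prod_congr rfl fun k _ => Finset.sum_div _ _ (2:ℂ)]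
    rw [Fintype.prod_sum]
    rw [Finset.sum_mul_sum]
    refine Finset.sum_congr rfl fun q0 _ => Finset.sum_congr rfl fun g _ => ?_
    rw [Finset.prod_congr rfl fun k _ => show
        chi (z k * ((g k).1 + (g k).2)) * RR k.succ (g k).1 (g k).2 / 2
          = chi (z k * ((g k).1 + (g k).2)) * (RR k.succ (g k).1 (g k).2 / 2) from
        mul_div_assoc _ _ _]
    rw [Finset.prod_mul_distrib]
    ring
  have hsign : ∀ (q0 : Fin 2 × Fin 2) (g : Fin (N + 1) → Fin 2 × Fin 2),
      (∑ z : Fin (N + 1) → Fin 2, chi ((∑ i, z i) * (q0.1 + q0.2)) *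
          ∏ k : Fin (N + 1), chi (z k * ((g k).1 + (g k).2)))
        = if (∀ k, (g k).1 + (g k).2 = q0.1 + q0.2) then (2 : ℂ) ^ (N + 1) else 0 := by
    intro q0 g
    have hz : ∀ z : Fin (N + 1) → Fin 2,
        chi ((∑ i, z i) * (q0.1 + q0.2)) *
            ∏ k : Fin (N + 1), chi (z k * ((g k).1 + (g k).2))
          = ∏ k : Fin (N + 1), chi (z k * ((q0.1 + q0.2) + ((g k).1 + (g k).2))) := by
      intro z
      rw [Finset.sum_mul, chi_sum, ← Finset.prod_mul_distrib]
      exact Finset.prod_congr rfl fun k _ => by rw [← chi_add, ← mul_add]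
    rw [Finset.sum_congr rfl fun z _ => hz z]
    rw [← Fintype.prod_sum fun k u => chi (u * ((q0.1 + q0.2) + ((g k).1 + (g k).2)))]
    rw [Finset.prod_congr rfl fun k _ => sum_chi_mul ((q0.1 + q0.2) + ((g k).1 + (g k).2))]
    rw [Fintype.prod_ite_zero]
    have hiff : (∀ i : Fin (N + 1), (q0.1 + q0.2) + ((g i).1 + (g i).2) = 0)
        ↔ (∀ k, (g k).1 + (g k).2 = q0.1 + q0.2) :=
      forall_congr' fun k => (fin2_add_eq_zero_iff _ _).trans eq_comm
    simp only [hiff, Finset.prod_const, Finset.card_univ, Fintype.card_fin]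
  have hpull : ∀ q0 : Fin 2 × Fin 2,
      (∑ g : Fin (N + 1) → Fin 2 × Fin 2, ∑ z : Fin (N + 1) → Fin 2,
          (chi ((∑ i, z i) * (q0.1 + q0.2)) *
              ∏ k : Fin (N + 1), chi (z k * ((g k).1 + (g k).2))) *
            ((RR 0 q0.1 q0.2 / 2) *
              ∏ k : Fin (N + 1), (RR k.succ (g k).1 (g k).2 / 2)))
        = ∑ g : Fin (N + 1) → Fin 2 × Fin 2,
            (if (∀ k, (g k).1 + (g k).2 = q0.1 + q0.2) then (2 : ℂ) ^ (N + 1) else 0) *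
              ((RR 0 q0.1 q0.2 / 2) *
                ∏ k : Fin (N + 1), (RR k.succ (g k).1 (g k).2 / 2)) := by
    intro q0
    refine Finset.sum_congr rfl fun g _ => ?_
    rw [← Finset.sum_mul, hsign q0 g]
  have stepA : (∑ z : Fin (N + 1) → Fin 2,
      ghzOverlap (n 0) (∑ i, z i) (ρ 0) *
        ∏ i : Fin (N + 1), ghzOverlap (n i.succ) (z i) (ρ i.succ))
      = ∑ q0 : Fin 2 × Fin 2, ∑ g : Fin (N + 1) → Fin 2 × Fin 2,
          ∑ z : Fin (N + 1) → Fin 2,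
            (chi ((∑ i, z i) * (q0.1 + q0.2)) *
                ∏ k : Fin (N + 1), chi (z k * ((g k).1 + (g k).2))) *
              ((RR 0 q0.1 q0.2 / 2) *
                ∏ k : Fin (N + 1), (RR k.succ (g k).1 (g k).2 / 2)) := by
    rw [Finset.sum_congr rfl fun z _ => h1 z]
    exact Finset.sum_comm.trans (Finset.sum_congr rfl fun q0 _ => Finset.sum_comm)
  rw [stepA, Finset.sum_congr rfl fun q0 _ => hpull q0, Fintype.sum_prod_type]
  refine Finset.sum_congr rfl fun a _ => Finset.sum_congr rfl fun b _ => ?_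
  have hY : (∑ y : Fin (N + 1) → Fin 2,
        ∏ k : Fin (N + 1), RR k.succ (y k + a) (y k + b))
      = ∑ g : Fin (N + 1) → Fin 2 × Fin 2,
          if (∀ k, (g k).1 + (g k).2 = a + b)
          then ∏ k : Fin (N + 1), RR k.succ (g k).1 (g k).2 else 0 := by
    have hY1 : (∏ k : Fin (N + 1), ∑ u : Fin 2, RR k.succ (u + a) (u + b))
        = ∑ y : Fin (N + 1) → Fin 2, ∏ k : Fin (N + 1), RR k.succ (y k + a) (y k + b) :=
      Fintype.prod_sum _
    have hY2 : (∏ k : Fin (N + 1), ∑ q : Fin 2 × Fin 2,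
          if q.1 + q.2 = a + b then RR k.succ q.1 q.2 else 0)
        = ∑ g : Fin (N + 1) → Fin 2 × Fin 2, ∏ k : Fin (N + 1),
            if (g k).1 + (g k).2 = a + b then RR k.succ (g k).1 (g k).2 else 0 :=
      Fintype.prod_sum _
    rw [← hY1]
    rw [Finset.prod_congr rfl fun k _ => local_sum a b (fun u v => RR k.succ u v)]
    rw [hY2]
    exact Finset.sum_congr rfl fun g _ => Fintype.prod_ite_zero.trans (by congr)
  rw [← Finset.sum_div, ← Finset.mul_sum, hY, Finset.mul_sum, Finset.sum_div]
  refine Finset.sum_congr rfl fun g _ => ?_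
  have h2pow : ∏ k : Fin (N + 1), (RR k.succ (g k).1 (g k).2 / 2)
      = (∏ k : Fin (N + 1), RR k.succ (g k).1 (g k).2) / (2 : ℂ) ^ (N + 1) := by
    rw [Finset.prod_div_distrib, Finset.prod_const]
    simp
  rw [h2pow]
  by_cases hg : ∀ k, (g k).1 + (g k).2 = a + b
  · rw [if_pos hg, if_pos hg]
    have h2 : ((2 : ℂ) ^ (N + 1)) ≠ 0 := by positivity
    field_simp
  · rw [if_neg hg, if_neg hg, mul_zero, zero_div, zero_mul]
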